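/- Let Z₀ and Z₁ be symmetric positive definite n×n real matrices, let μ₁, …, μ_n be the eigenvalues (with multiplicity) of A := Z₁^(-1/2)·Z₀·Z₁^(-1/2), and set δ := √(Σ_{i=1}^n (log μ_i)²). Then δ² ≤ h(Z₀, Z₁) ≤ 2·(cosh(δ) − 1). -/

import Mathlib

open Matrix

section
open scoped ComplexOrder

/-- The positive semidefinite square root of a positive semidefinite matrix
(removed from Mathlib; restored with its old definition). -/
noncomputable def Matrix.PosSemidef.sqrt {n 𝕜 : Type*} [Fintype n] [RCLike 𝕜] [DecidableEq n]
    {A : Matrix n n 𝕜} (hA : A.PosSemidef) : Matrix n n 𝕜 :=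
  hA.isHermitian.eigenvectorUnitary.1 * diagonal ((↑) ∘ (√·) ∘ hA.isHermitian.eigenvalues) *
    (star hA.isHermitian.eigenvectorUnitary : Matrix n n 𝕜)

end

lemma sqrt_isHermitian' {m : ℕ} {Z : Matrix (Fin m) (Fin m) ℝ} (hZ : Z.PosSemidef) :
    (PosSemidef.sqrt hZ).IsHermitian := by
  unfold PosSemidef.sqrt
  rw [star_eq_conjTranspose]
  exact isHermitian_mul_mul_conjTranspose _ (isHermitian_diagonal _)

lemma sqrt_mul_self' {m : ℕ} {Z : Matrix (Fin m) (Fin m) ℝ} (hZ : Z.PosSemidef) :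
    PosSemidef.sqrt hZ * PosSemidef.sqrt hZ = Z := by
  unfold PosSemidef.sqrt
  have hU1 : (star hZ.isHermitian.eigenvectorUnitary : Matrix (Fin m) (Fin m) ℝ) *
      hZ.isHermitian.eigenvectorUnitary.1 = 1 :=
    Unitary.coe_star_mul_self hZ.isHermitian.eigenvectorUnitary
  have hd : diagonal (RCLike.ofReal ∘ (√·) ∘ hZ.isHermitian.eigenvalues) *
      diagonal (RCLike.ofReal ∘ (√·) ∘ hZ.isHermitian.eigenvalues)
      = diagonal (RCLike.ofReal ∘ hZ.isHermitian.eigenvalues : Fin m → ℝ) := by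
    rw [diagonal_mul_diagonal]
    congr 1
    funext i
    simp [Real.mul_self_sqrt (hZ.eigenvalues_nonneg i)]
  conv_rhs => rw [hZ.isHermitian.spectral_theorem, Unitary.conjStarAlgAut_apply]
  calc _ = hZ.isHermitian.eigenvectorUnitary.1 * (diagonal (RCLike.ofReal ∘ (√·) ∘ hZ.isHermitian.eigenvalues) *
      ((star hZ.isHermitian.eigenvectorUnitary : Matrix (Fin m) (Fin m) ℝ) *
      hZ.isHermitian.eigenvectorUnitary.1) * diagonal (RCLike.ofReal ∘ (√·) ∘ hZ.isHermitian.eigenvalues)) *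
      (star hZ.isHermitian.eigenvectorUnitary : Matrix (Fin m) (Fin m) ℝ) := by
        simp only [Matrix.mul_assoc]
    _ = _ := by rw [hU1, Matrix.mul_one, hd]

/-- Pointwise lower bound: `t ^ 2 ≤ 2 * cosh t - 2`. -/
lemma sq_le_two_cosh_sub_two (t : ℝ) : t ^ 2 ≤ 2 * Real.cosh t - 2 := by
  have hc : Real.cosh t = 2 * Real.sinh (t / 2) ^ 2 + 1 := by
    have := Real.cosh_two_mul (t / 2)
    have hsq := Real.cosh_sq (t / 2)
    rw [show 2 * (t / 2) = t by ring] at this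
    rw [this, hsq]; ring
  have habs : |t / 2| ≤ Real.sinh |t / 2| := Real.self_le_sinh_iff.mpr (abs_nonneg _)
  have h2 : (t / 2) ^ 2 ≤ Real.sinh (t / 2) ^ 2 := by
    rw [← sq_abs (t / 2), ← sq_abs (Real.sinh (t / 2)), Real.abs_sinh]
    exact pow_le_pow_left₀ (abs_nonneg _) habs 2
  nlinarith [h2, hc]

lemma convexOn_sinh : ConvexOn ℝ (Set.Ici 0) Real.sinh := by
  refine MonotoneOn.convexOn_of_deriv (convex_Ici 0) Real.continuous_sinh.continuousOn
    (Real.differentiable_sinh.differentiableOn) ?_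
  rw [Real.deriv_sinh, interior_Ici]
  intro x hx y hy hxy
  rw [Real.cosh_le_cosh, abs_of_nonneg (le_of_lt hx), abs_of_nonneg (le_of_lt hy)]
  exact hxy

/-- `sinh x / x` is monotone: for `0 ≤ x ≤ y`, `y * sinh x ≤ x * sinh y`. -/
lemma mul_sinh_le (x y : ℝ) (hx : 0 ≤ x) (hxy : x ≤ y) :
    y * Real.sinh x ≤ x * Real.sinh y := by
  rcases eq_or_lt_of_le (hx.trans hxy) with hy | hy
  · have hx0 : x = 0 := le_antisymm (hxy.trans hy.symm.le) hx
    simp [hx0, ← hy]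
  · have key := convexOn_sinh.2 (Set.mem_Ici.mpr (le_refl (0:ℝ)))
      (Set.mem_Ici.mpr (hx.trans hxy))
      (show (0:ℝ) ≤ 1 - x / y by
        have : x / y ≤ 1 := (div_le_one hy).mpr hxy; linarith)
      (show (0:ℝ) ≤ x / y from div_nonneg hx hy.le)
      (show (1 - x / y) + x / y = 1 by ring)
    simp only [smul_eq_mul, mul_zero, zero_add, Real.sinh_zero] at key
    rw [div_mul_cancel₀ x hy.ne'] at key
    calc y * Real.sinh x ≤ y * (x / y * Real.sinh y) :=
          mul_le_mul_of_nonneg_left key hy.le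
      _ = x * Real.sinh y := by field_simp

lemma hasDerivAt_cosh_sqrt {u : ℝ} (hu : 0 < u) :
    HasDerivAt (fun v => Real.cosh (Real.sqrt v))
      (Real.sinh (Real.sqrt u) * (1 / (2 * Real.sqrt u))) u :=
  (Real.hasDerivAt_cosh (Real.sqrt u)).comp u (Real.hasDerivAt_sqrt hu.ne')

lemma deriv_cosh_sqrt {u : ℝ} (hu : 0 < u) :
    deriv (fun v => Real.cosh (Real.sqrt v)) u
      = Real.sinh (Real.sqrt u) * (1 / (2 * Real.sqrt u)) :=
  (hasDerivAt_cosh_sqrt hu).deriv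

lemma convexOn_cosh_sqrt : ConvexOn ℝ (Set.Ici 0) (fun u => Real.cosh (Real.sqrt u)) := by
  refine MonotoneOn.convexOn_of_deriv (convex_Ici 0)
    ((Real.continuous_cosh.comp Real.continuous_sqrt).continuousOn) ?_ ?_
  · rw [interior_Ici]
    exact fun u hu => (hasDerivAt_cosh_sqrt hu).differentiableAt.differentiableWithinAt
  · rw [interior_Ici]
    intro u hu v hv huv
    rw [deriv_cosh_sqrt hu, deriv_cosh_sqrt hv]
    have hsu : 0 < Real.sqrt u := Real.sqrt_pos.mpr hu
    have hsv : 0 < Real.sqrt v := Real.sqrt_pos.mpr hv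
    have hle : Real.sqrt u ≤ Real.sqrt v := Real.sqrt_le_sqrt huv
    have key := mul_sinh_le (Real.sqrt u) (Real.sqrt v) hsu.le hle
    rw [mul_one_div, mul_one_div, div_le_div_iff₀ (by positivity) (by positivity)]
    nlinarith [key]

lemma cosh_sqrt_superadd {a b : ℝ} (ha : 0 ≤ a) (hb : 0 ≤ b) :
    Real.cosh (Real.sqrt a) + Real.cosh (Real.sqrt b)
      ≤ Real.cosh (Real.sqrt (a + b)) + 1 := by
  rcases eq_or_lt_of_le (add_nonneg ha hb) with hs | hs
  · have ha0 : a = 0 := by linarith [ha, hb, hs]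
    have hb0 : b = 0 := by linarith [ha, hb, hs]
    simp [ha0, hb0]
  · set s := a + b with hsdef
    have hmem : ∀ c : ℝ, 0 ≤ c → c ≤ s →
        Real.cosh (Real.sqrt c) ≤ (1 - c / s) + c / s * Real.cosh (Real.sqrt s) := by
      intro c hc hcs
      have key := convexOn_cosh_sqrt.2 (Set.mem_Ici.mpr (le_refl (0:ℝ)))
        (Set.mem_Ici.mpr hs.le)
        (show (0:ℝ) ≤ 1 - c / s by
          have : c / s ≤ 1 := (div_le_one hs).mpr hcs; linarith)
        (show (0:ℝ) ≤ c / s from div_nonneg hc hs.le)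
        (show (1 - c / s) + c / s = 1 by ring)
      simp only [smul_eq_mul, mul_zero, zero_add, Real.sqrt_zero, Real.cosh_zero,
        mul_one] at key
      rwa [div_mul_cancel₀ c hs.ne'] at key
    have hA := hmem a ha (by linarith)
    have hB := hmem b hb (by linarith)
    have hsum : a / s + b / s = 1 := by field_simp; exact hsdef.symm
    have hco : (1:ℝ) ≤ Real.cosh (Real.sqrt s) := Real.one_le_cosh _
    nlinarith [hA, hB]

lemma sum_cosh_sqrt_sub_one_le {ι : Type*} (s : Finset ι) (u : ι → ℝ)
    (hu : ∀ i ∈ s, 0 ≤ u i) :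
    ∑ i ∈ s, (Real.cosh (Real.sqrt (u i)) - 1)
      ≤ Real.cosh (Real.sqrt (∑ i ∈ s, u i)) - 1 := by
  classical
  induction s using Finset.induction_on with
  | empty => simp
  | insert a t hnotmem ih =>
    have hua : 0 ≤ u a := hu a (Finset.mem_insert_self a t)
    have hut : ∀ i ∈ t, 0 ≤ u i := fun i hi => hu i (Finset.mem_insert_of_mem hi)
    have hsum : 0 ≤ ∑ i ∈ t, u i := Finset.sum_nonneg hut
    rw [Finset.sum_insert hnotmem, Finset.sum_insert hnotmem]
    have h1 := ih hut
    have h2 := cosh_sqrt_superadd hua hsum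
    linarith

lemma posDef_conj_inv {m : ℕ} {M B : Matrix (Fin m) (Fin m) ℝ} (hM : M.PosDef)
    (hB : IsUnit B.det) : (Bᴴ * M * B).PosDef := by
  refine PosDef.of_dotProduct_mulVec_pos (isHermitian_conjTranspose_mul_mul B hM.1) fun x hx => ?_
  have hinj : Function.Injective B.mulVec :=
    mulVec_injective_iff_isUnit.mpr ((isUnit_iff_isUnit_det B).mpr hB)
  have hBx : B *ᵥ x ≠ 0 := fun h => hx <| hinj.eq_iff' (mulVec_zero _) |>.1 h
  simpa only [star_mulVec, dotProduct_mulVec, vecMul_vecMul] using hM.dotProduct_mulVec_pos hBx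

section TraceEig

variable {m : ℕ} {A : Matrix (Fin m) (Fin m) ℝ} (hA : A.IsHermitian)

lemma trace_eq_sum_eigenvalues' : A.trace = ∑ i, hA.eigenvalues i := by
  conv_lhs => rw [hA.spectral_theorem, Unitary.conjStarAlgAut_apply]
  rw [trace_mul_comm, ← Matrix.mul_assoc]
  rw [show (star (hA.eigenvectorUnitary : Matrix (Fin m) (Fin m) ℝ)) *
      (hA.eigenvectorUnitary : Matrix (Fin m) (Fin m) ℝ) = 1 from
    Unitary.coe_star_mul_self hA.eigenvectorUnitary, Matrix.one_mul, trace_diagonal]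
  simp

lemma trace_inv_eq_sum_inv_eigenvalues (hpos : ∀ i, hA.eigenvalues i ≠ 0) :
    (A⁻¹).trace = ∑ i, (hA.eigenvalues i)⁻¹ := by
  have hspec := hA.spectral_theorem
  rw [Unitary.conjStarAlgAut_apply] at hspec
  set U : Matrix (Fin m) (Fin m) ℝ := (hA.eigenvectorUnitary : Matrix (Fin m) (Fin m) ℝ)
    with hUdef
  have hU1 : star U * U = 1 := Unitary.coe_star_mul_self hA.eigenvectorUnitary
  have hU2 : U * star U = 1 := Unitary.coe_mul_star_self hA.eigenvectorUnitary
  have hdiag : diagonal (fun i => (hA.eigenvalues i)⁻¹) *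
      diagonal (RCLike.ofReal ∘ hA.eigenvalues) = (1 : Matrix (Fin m) (Fin m) ℝ) := by
    have hfun : (fun i => (hA.eigenvalues i)⁻¹ * (RCLike.ofReal ∘ hA.eigenvalues) i)
        = fun _ : Fin m => (1 : ℝ) := funext fun i => by
      simp [inv_mul_cancel₀ (hpos i)]
    rw [diagonal_mul_diagonal, hfun, diagonal_one]
  have hAinv : A⁻¹ = U * diagonal (fun i => (hA.eigenvalues i)⁻¹) * star U := by
    apply Matrix.inv_eq_left_inv
    have h1 := congrArg
      (fun X => (U * diagonal (fun i => (hA.eigenvalues i)⁻¹) * star U) * X) hspec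
    rw [h1]
    calc U * diagonal (fun i => (hA.eigenvalues i)⁻¹) * star U *
          (U * diagonal (RCLike.ofReal ∘ hA.eigenvalues) * star U)
        = U * (diagonal (fun i => (hA.eigenvalues i)⁻¹) * ((star U * U) *
          diagonal (RCLike.ofReal ∘ hA.eigenvalues))) * star U := by
          simp only [Matrix.mul_assoc]
      _ = 1 := by rw [hU1, Matrix.one_mul, hdiag, Matrix.mul_one, hU2]
  rw [hAinv, trace_mul_comm, ← Matrix.mul_assoc, hU1, Matrix.one_mul, trace_diagonal]

end TraceEig

/-- For symmetric positive definite `Z₀ Z₁`, with `μᵢ` the eigenvalues of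
`A = Z₁^(-1/2) * Z₀ * Z₁^(-1/2)` and `δ = √(∑ i, (log μᵢ)²)` (the geodesic
distance), the divergence `h(Z₀, Z₁)` satisfies `δ² ≤ h(Z₀,Z₁) ≤ 2 (cosh δ - 1)`. -/
theorem geodesic_sq_le_divergence_le_cosh
    (n : ℕ) (hn : 1 ≤ n) (Z₀ Z₁ : Matrix (Fin n) (Fin n) ℝ)
    (hZ₀ : Z₀.PosDef) (hZ₁ : Z₁.PosDef)
    (hA : ((PosSemidef.sqrt hZ₁.posSemidef)⁻¹ * Z₀ * (PosSemidef.sqrt hZ₁.posSemidef)⁻¹).IsHermitian)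
    (δ : ℝ) (hδ : δ = Real.sqrt (∑ i, (Real.log (hA.eigenvalues i)) ^ 2)) :
    δ ^ 2 ≤ (Z₀ * Z₁⁻¹).trace + (Z₀⁻¹ * Z₁).trace - 2 * n ∧
      (Z₀ * Z₁⁻¹).trace + (Z₀⁻¹ * Z₁).trace - 2 * n ≤ 2 * (Real.cosh δ - 1) := by
  set S := PosSemidef.sqrt hZ₁.posSemidef with hSdef
  have hSherm : S.IsHermitian := sqrt_isHermitian' hZ₁.posSemidef
  have hSS : S * S = Z₁ := sqrt_mul_self' hZ₁.posSemidef
  have hdetZ₁ : 0 < Z₁.det := hZ₁.det_pos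
  have hdetS : IsUnit S.det := by
    have hmul : S.det * S.det = Z₁.det := by rw [← det_mul, hSS]
    refine isUnit_iff_ne_zero.mpr fun h => ?_
    rw [h, mul_zero] at hmul
    exact hdetZ₁.ne hmul
  have hdetSinv : IsUnit (S⁻¹).det := S.isUnit_nonsing_inv_det hdetS
  have hdetZ₀ : IsUnit Z₀.det := isUnit_iff_ne_zero.mpr hZ₀.det_pos.ne'
  set A := S⁻¹ * Z₀ * S⁻¹ with hAdef
  have hSinvherm : (S⁻¹)ᴴ = S⁻¹ := by rw [conjTranspose_nonsing_inv, hSherm.eq]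
  have hApd : A.PosDef := by
    have h := posDef_conj_inv (M := Z₀) (B := S⁻¹) hZ₀ hdetSinv
    rw [hSinvherm] at h
    exact h
  have hμpos : ∀ i, 0 < hA.eigenvalues i := fun i => hApd.eigenvalues_pos i
  have hZ₁inv : Z₁⁻¹ = S⁻¹ * S⁻¹ := by rw [← hSS, Matrix.mul_inv_rev]
  have htr1 : (Z₀ * Z₁⁻¹).trace = A.trace := by
    rw [hZ₁inv, ← Matrix.mul_assoc, trace_mul_comm (Z₀ * S⁻¹) S⁻¹, hAdef,
      ← Matrix.mul_assoc]
  have hAinv_eq : A⁻¹ = S * Z₀⁻¹ * S := by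
    apply Matrix.inv_eq_left_inv
    rw [hAdef]
    calc (S * Z₀⁻¹ * S) * (S⁻¹ * Z₀ * S⁻¹)
        = S * (Z₀⁻¹ * ((S * S⁻¹) * Z₀)) * S⁻¹ := by simp only [Matrix.mul_assoc]
      _ = 1 := by
          rw [Matrix.mul_nonsing_inv S hdetS, Matrix.one_mul,
            Matrix.nonsing_inv_mul Z₀ hdetZ₀, Matrix.mul_one,
            Matrix.mul_nonsing_inv S hdetS]
  have htr2 : (Z₀⁻¹ * Z₁).trace = (A⁻¹).trace := by
    have h : Z₀⁻¹ * Z₁ = Z₀⁻¹ * (S * S) := by rw [hSS]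
    rw [h, ← Matrix.mul_assoc, trace_mul_comm (Z₀⁻¹ * S) S, hAinv_eq, ← Matrix.mul_assoc]
  have hsum1 : A.trace = ∑ i, hA.eigenvalues i := trace_eq_sum_eigenvalues' hA
  have hsum2 : (A⁻¹).trace = ∑ i, (hA.eigenvalues i)⁻¹ :=
    trace_inv_eq_sum_inv_eigenvalues hA fun i => (hμpos i).ne'
  set μ := hA.eigenvalues with hμdef
  set t : Fin n → ℝ := fun i => Real.log (μ i) with htdef
  have hμt : ∀ i, μ i + (μ i)⁻¹ = 2 * Real.cosh (t i) := by
    intro i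
    rw [Real.cosh_eq, htdef]
    simp only
    rw [Real.exp_log (hμpos i), Real.exp_neg, Real.exp_log (hμpos i)]
    ring
  have hexp : ∑ i, (2 * Real.cosh (t i) - 2) = (∑ i, μ i) + (∑ i, (μ i)⁻¹) - 2 * n := by
    have h : ∀ i : Fin n, 2 * Real.cosh (t i) - 2 = μ i + (μ i)⁻¹ - 2 := fun i => by
      rw [← hμt i]
    rw [Finset.sum_congr rfl fun i _ => h i, Finset.sum_sub_distrib,
      Finset.sum_add_distrib, Finset.sum_const, Finset.card_univ, Fintype.card_fin,
      nsmul_eq_mul]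
    ring
  have hlhs : (Z₀ * Z₁⁻¹).trace + (Z₀⁻¹ * Z₁).trace - 2 * n
      = ∑ i, (2 * Real.cosh (t i) - 2) := by
    rw [htr1, htr2, hsum1, hsum2, hexp]
  have hsq_nonneg : 0 ≤ ∑ i, t i ^ 2 := Finset.sum_nonneg fun i _ => sq_nonneg _
  have hδsq : δ ^ 2 = ∑ i, t i ^ 2 := by rw [hδ, Real.sq_sqrt hsq_nonneg]
  constructor
  · rw [hlhs, hδsq]
    exact Finset.sum_le_sum fun i _ => sq_le_two_cosh_sub_two (t i)
  · rw [hlhs]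
    have key := sum_cosh_sqrt_sub_one_le Finset.univ (fun i => t i ^ 2)
      fun i _ => sq_nonneg _
    have heq : ∀ i : Fin n, 2 * Real.cosh (t i) - 2
        = 2 * (Real.cosh (Real.sqrt (t i ^ 2)) - 1) := fun i => by
      rw [Real.sqrt_sq_eq_abs, Real.cosh_abs]; ring
    calc ∑ i, (2 * Real.cosh (t i) - 2)
        = 2 * ∑ i, (Real.cosh (Real.sqrt (t i ^ 2)) - 1) := by
          rw [Finset.mul_sum]
          exact Finset.sum_congr rfl fun i _ => heq i
      _ ≤ 2 * (Real.cosh (Real.sqrt (∑ i, t i ^ 2)) - 1) := by linarith [key]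
      _ = 2 * (Real.cosh δ - 1) := by rw [← hδ]
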